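/- Differentiation under the integral sign with variable endpoint: Let F be a real Banach space and H a finite-dimensional real normed space, let n ≥ 1 (or n = ∞), let a ∈ ℝ, and assume s : H → ℝ and Φ : H × ℝ → F are of class C^n. Then x ↦ ∫_a^{s(x)} Φ(x,t) dt is of class C^n with derivative at x equal to the linear map ∫_a^{s(x)} ∂Φ/∂x (x,t) dt + Φ(x, s(x)) ⊗ Ds(x) (i.e., v ↦ ∫_a^{s(x)} D_xΦ(x,t)(v) dt + Ds(x)(v)·Φ(x, s(x))). -/

import Mathlib

open MeasureTheory Set Filter Metric ContinuousLinearMap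
open scoped Topology Interval ContDiff

namespace DPVE

variable {H : Type*} [NormedAddCommGroup H] [NormedSpace ℝ H]
variable {E : Type*} [NormedAddCommGroup E] [NormedSpace ℝ E]

/-- The partial derivative in the first variable, as a composition with `inl`. -/
theorem hasPartial {Ψ : H → ℝ → E} (hΨ : ContDiff ℝ 1 ↿Ψ) (x : H) (t : ℝ) :
    HasFDerivAt (fun y => Ψ y t) ((fderiv ℝ ↿Ψ (x, t)).comp (ContinuousLinearMap.inl ℝ H ℝ)) x :=
  by
  have h := HasFDerivAt.comp (f := fun e : H => (e, t)) x
    ((hΨ.differentiable one_ne_zero (x, t)).hasFDerivAt) (hasFDerivAt_prodMk_left x t)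
  exact h

/-- The uncurried partial derivative is `C^m` when `↿Ψ` is `C^(m+1)`. -/
theorem contDiff_partial {Ψ : H → ℝ → E} {n m : WithTop ℕ∞} (hΨ : ContDiff ℝ n ↿Ψ)
    (hmn : m + 1 ≤ n) :
    ContDiff ℝ m
      ↿(fun (x : H) (t : ℝ) => (fderiv ℝ ↿Ψ (x, t)).comp (ContinuousLinearMap.inl ℝ H ℝ)) :=
  ((hΨ.fderiv_right hmn).comp (contDiff_fst.prodMk contDiff_snd)).clm_comp contDiff_const

set_option synthInstance.maxHeartbeats 1000000 in
/-- Key analytic step: derivative of a parametric primitive in both the parameter and the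
endpoint. -/
theorem key [FiniteDimensional ℝ H] [CompleteSpace E]
    {Ψ : H → ℝ → E} (hΨ : ContDiff ℝ 1 ↿Ψ) (a : ℝ) (x₀ : H) (u₀ : ℝ) :
    HasFDerivAt (fun p : H × ℝ => ∫ t in a..p.2, Ψ p.1 t)
      ((∫ t in a..u₀, fderiv ℝ (fun y => Ψ y t) x₀).comp (ContinuousLinearMap.fst ℝ H ℝ) +
        (ContinuousLinearMap.snd ℝ H ℝ).smulRight (Ψ x₀ u₀)) (x₀, u₀) := by
  have cΨ : Continuous ↿Ψ := hΨ.continuous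
  have cΨx : ∀ x, Continuous (Ψ x) := fun x => cΨ.comp (Continuous.prodMk_right x)
  have hint : ∀ x u v, IntervalIntegrable (Ψ x) volume u v :=
    fun x u v => (cΨx x).intervalIntegrable u v
  set D : H × ℝ → H →L[ℝ] E := fun p => (fderiv ℝ ↿Ψ p).comp (ContinuousLinearMap.inl ℝ H ℝ)
    with hDdef
  have hD : ∀ x t, HasFDerivAt (fun y => Ψ y t) (D (x, t)) x := fun x t => hasPartial hΨ x t
  have cD : Continuous D := (hΨ.continuous_fderiv one_ne_zero).clm_comp continuous_const
  -- step 1 : fixed endpoint part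
  obtain ⟨C, hC⟩ : ∃ C, ∀ p ∈ closedBall x₀ 1 ×ˢ uIcc a u₀, ‖D p‖ ≤ C :=
    ((isCompact_closedBall x₀ 1).prod isCompact_uIcc).exists_bound_of_continuousOn
      cD.continuousOn
  have step1 : HasFDerivAt (fun x => ∫ t in a..u₀, Ψ x t) (∫ t in a..u₀, D (x₀, t)) x₀ := by
    apply intervalIntegral.hasFDerivAt_integral_of_dominated_of_fderiv_le
      (F' := fun x t => D (x, t)) (bound := fun _ => C) (s := ball x₀ 1) (ball_mem_nhds x₀ zero_lt_one)
    · exact Eventually.of_forall fun x => (cΨx x).aestronglyMeasurable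
    · exact hint x₀ a u₀
    · exact (cD.comp (Continuous.prodMk_right x₀)).aestronglyMeasurable
    · exact Eventually.of_forall fun t ht x hx =>
        hC (x, t) ⟨ball_subset_closedBall hx, uIoc_subset_uIcc ht⟩
    · exact intervalIntegrable_const
    · exact Eventually.of_forall fun t _ x _ => hD x t
  -- step 2 : moving endpoint part
  have step2 : HasFDerivAt (fun p : H × ℝ => ∫ t in u₀..p.2, Ψ p.1 t)
      ((ContinuousLinearMap.snd ℝ H ℝ).smulRight (Ψ x₀ u₀)) (x₀, u₀) := by
    rw [hasFDerivAt_iff_isLittleO, Asymptotics.isLittleO_iff]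
    intro ε εpos
    obtain ⟨δ, δpos, hδ⟩ := Metric.continuousAt_iff.mp (cΨ.continuousAt (x := (x₀, u₀))) ε εpos
    filter_upwards [ball_mem_nhds (x₀, u₀) δpos] with p hp
    have key0 : ∀ t ∈ Ι u₀ p.2, ‖Ψ p.1 t - Ψ x₀ u₀‖ ≤ ε := by
      intro t ht
      have h1 : |t - u₀| ≤ |p.2 - u₀| := by
        rcases le_total u₀ p.2 with h | h
        · rw [uIoc_of_le h] at ht
          rw [abs_of_pos (by linarith [ht.1]), abs_of_nonneg (by linarith)]
          linarith [ht.2]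
        · rw [uIoc_of_ge h] at ht
          rw [abs_of_nonpos (by linarith [ht.2]), abs_of_nonpos (by linarith)]
          linarith [ht.1]
      have hdist : dist (p.1, t) (x₀, u₀) < δ := by
        have h2 : dist t u₀ ≤ dist p.2 u₀ := by rw [Real.dist_eq, Real.dist_eq]; exact h1
        calc dist (p.1, t) (x₀, u₀) = max (dist p.1 x₀) (dist t u₀) := Prod.dist_eq
          _ ≤ max (dist p.1 x₀) (dist p.2 u₀) := max_le_max le_rfl h2
          _ = dist p (x₀, u₀) := by rw [Prod.dist_eq]
          _ < δ := mem_ball.mp hp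
      have := hδ hdist
      rw [dist_eq_norm] at this
      exact this.le
    rw [intervalIntegral.integral_same, sub_zero]
    have hsr : ((ContinuousLinearMap.snd ℝ H ℝ).smulRight (Ψ x₀ u₀)) (p - (x₀, u₀)) =
        (p.2 - u₀) • Ψ x₀ u₀ := by
      simp [ContinuousLinearMap.smulRight_apply]
    rw [hsr, show (p.2 - u₀) • Ψ x₀ u₀ = ∫ _t in u₀..p.2, Ψ x₀ u₀ from
        (intervalIntegral.integral_const _).symm,
      ← intervalIntegral.integral_sub (hint p.1 u₀ p.2) intervalIntegrable_const]
    calc ‖∫ t in u₀..p.2, (Ψ p.1 t - Ψ x₀ u₀)‖ ≤ ε * |p.2 - u₀| :=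
          intervalIntegral.norm_integral_le_of_norm_le_const key0
      _ ≤ ε * ‖p - (x₀, u₀)‖ := by
          apply mul_le_mul_of_nonneg_left _ εpos.le
          rw [(show |p.2 - u₀| = ‖(p - (x₀, u₀)).2‖ by simp [Real.norm_eq_abs])]
          exact norm_snd_le _
  -- combine
  have hsplit : (fun p : H × ℝ => ∫ t in a..p.2, Ψ p.1 t) =
      fun p : H × ℝ => (∫ t in a..u₀, Ψ p.1 t) + ∫ t in u₀..p.2, Ψ p.1 t :=
    funext fun p =>
      (intervalIntegral.integral_add_adjacent_intervals (hint p.1 a u₀) (hint p.1 u₀ p.2)).symm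
  have hieq : (∫ t in a..u₀, fderiv ℝ (fun y => Ψ y t) x₀) = ∫ t in a..u₀, D (x₀, t) :=
    intervalIntegral.integral_congr fun t _ => (hD x₀ t).fderiv
  rw [hsplit, hieq]
  exact (step1.comp (x₀, u₀) hasFDerivAt_fst).add step2

/-- Inductive step: if the parametric primitive of the partial derivative is `C^m`, then the
parametric primitive of a `C^(m+1)` function is `C^(m+1)`. -/
theorem step [FiniteDimensional ℝ H] [CompleteSpace E]
    {Ψ : H → ℝ → E} {m : WithTop ℕ∞} (hm : m ≠ ⊤) (hΨ : ContDiff ℝ (m + 1) ↿Ψ) (a : ℝ)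
    (IH : ContDiff ℝ m (fun p : H × ℝ =>
      ∫ t in a..p.2, (fderiv ℝ ↿Ψ (p.1, t)).comp (ContinuousLinearMap.inl ℝ H ℝ))) :
    ContDiff ℝ (m + 1) (fun p : H × ℝ => ∫ t in a..p.2, Ψ p.1 t) := by
  have hΨ1 : ContDiff ℝ 1 ↿Ψ := hΨ.of_le le_add_self
  rw [contDiff_succ_iff_fderiv]
  refine ⟨fun p => (key hΨ1 a p.1 p.2).differentiableAt, fun h => absurd h hm, ?_⟩
  have hfd : (fderiv ℝ (fun p : H × ℝ => ∫ t in a..p.2, Ψ p.1 t)) =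
      fun p : H × ℝ =>
        (∫ t in a..p.2, fderiv ℝ (fun y => Ψ y t) p.1).comp (ContinuousLinearMap.fst ℝ H ℝ) +
          (ContinuousLinearMap.snd ℝ H ℝ).smulRight (Ψ p.1 p.2) :=
    funext fun p => (key hΨ1 a p.1 p.2).fderiv
  rw [hfd]
  have hieq : ∀ p : H × ℝ, (∫ t in a..p.2, fderiv ℝ (fun y => Ψ y t) p.1) =
      ∫ t in a..p.2, (fderiv ℝ ↿Ψ (p.1, t)).comp (ContinuousLinearMap.inl ℝ H ℝ) :=
    fun p => intervalIntegral.integral_congr fun t _ => (hasPartial hΨ1 p.1 t).fderiv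
  have hB1 : ContDiff ℝ m (fun p : H × ℝ =>
      (∫ t in a..p.2, fderiv ℝ (fun y => Ψ y t) p.1).comp (ContinuousLinearMap.fst ℝ H ℝ)) := by
    simp only [hieq]
    exact IH.clm_comp contDiff_const
  have hB2 : ContDiff ℝ m (fun p : H × ℝ =>
      (ContinuousLinearMap.snd ℝ H ℝ).smulRight (Ψ p.1 p.2)) :=
    contDiff_const.smulRight (hΨ.of_le le_self_add)
  exact hB1.add hB2

universe u v

/-- `C^m` regularity of parametric primitives, by induction on `m : ℕ`. -/
theorem aux : ∀ (m : ℕ) {H : Type u} [NormedAddCommGroup H] [NormedSpace ℝ H]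
    [FiniteDimensional ℝ H] {E : Type (max u v)} [NormedAddCommGroup E] [NormedSpace ℝ E]
    [CompleteSpace E] {Ψ : H → ℝ → E}, ContDiff ℝ m ↿Ψ → ∀ a : ℝ,
    ContDiff ℝ m (fun p : H × ℝ => ∫ t in a..p.2, Ψ p.1 t) := by
  intro m
  induction m with
  | zero =>
    intro H _ _ _ E _ _ _ Ψ hΨ a
    rw [show ((0 : ℕ) : WithTop ℕ∞) = 0 from rfl, contDiff_zero]
    exact intervalIntegral.continuous_parametric_primitive_of_continuous hΨ.continuous
  | succ m ih =>
    intro H _ _ _ E _ _ _ Ψ hΨ a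
    rw [show ((m + 1 : ℕ) : WithTop ℕ∞) = (m : WithTop ℕ∞) + 1 by push_cast; ring] at hΨ ⊢
    exact step (by simp) hΨ a
      (ih (Ψ := fun (x : H) (t : ℝ) => (fderiv ℝ ↿Ψ (x, t)).comp (ContinuousLinearMap.inl ℝ H ℝ))
        (contDiff_partial hΨ le_rfl) a)

/-- `C^n` regularity of parametric primitives in both variables, `n : ℕ∞`. -/
theorem contDiffG {H : Type u} [NormedAddCommGroup H] [NormedSpace ℝ H] [FiniteDimensional ℝ H]
    {E : Type v} [NormedAddCommGroup E] [NormedSpace ℝ E] [CompleteSpace E]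
    {Ψ : H → ℝ → E} {n : ℕ∞} (hn : 1 ≤ n) (hΨ : ContDiff ℝ n ↿Ψ) (a : ℝ) :
    ContDiff ℝ n (fun p : H × ℝ => ∫ t in a..p.2, Ψ p.1 t) := by
  cases n with
  | top =>
    refine step (m := (∞ : WithTop ℕ∞)) (by simp) hΨ a ?_
    rw [contDiff_infty]
    intro k
    exact aux k (Ψ := fun (x : H) (t : ℝ) =>
        (fderiv ℝ ↿Ψ (x, t)).comp (ContinuousLinearMap.inl ℝ H ℝ))
      (contDiff_partial hΨ (by exact_mod_cast (le_top : ((k + 1 : ℕ) : ℕ∞) ≤ ⊤))) a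
  | coe k =>
    rcases k with _ | m
    · simp at hn
    · rw [show (((m + 1 : ℕ) : ℕ∞) : WithTop ℕ∞) = ((m : ℕ) : WithTop ℕ∞) + 1 by
        push_cast; ring] at hΨ ⊢
      exact step (by simp) hΨ a
        (aux m (Ψ := fun (x : H) (t : ℝ) =>
            (fderiv ℝ ↿Ψ (x, t)).comp (ContinuousLinearMap.inl ℝ H ℝ))
          (contDiff_partial hΨ le_rfl) a)

end DPVE

set_option maxHeartbeats 1000000 in
/-- Differentiation under the integral sign with variable endpoint: if `s : H → ℝ` and
`Φ : H × ℝ → F` are `C^n` with `n ≥ 1`, then `x ↦ ∫ t in a..s x, Φ (x, t)` is `C^n`,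
with derivative `∫ t in a..s x, ∂Φ/∂x (x,t) dt + Φ(x, s x) ⊗ Ds(x)`. -/
theorem contDiff_parametric_integral_variable_endpoint
    {F H : Type*} [NormedAddCommGroup F] [NormedSpace ℝ F] [CompleteSpace F]
    [NormedAddCommGroup H] [NormedSpace ℝ H] [FiniteDimensional ℝ H]
    (n : ℕ∞) (hn : 1 ≤ n) (a : ℝ) {s : H → ℝ} {Φ : H → ℝ → F}
    (hs : ContDiff ℝ n s) (hΦ : ContDiff ℝ n ↿Φ) :
    ContDiff ℝ n (fun x ↦ ∫ t in a..s x, Φ x t) ∧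
      ∀ x : H, HasFDerivAt (fun x ↦ ∫ t in a..s x, Φ x t)
        ((∫ t in a..s x, fderiv ℝ (fun y ↦ Φ y t) x) +
          (fderiv ℝ s x).smulRight (Φ x (s x))) x := by
  have hn' : (1 : WithTop ℕ∞) ≤ (n : WithTop ℕ∞) := by exact_mod_cast hn
  have hΦ1 : ContDiff ℝ 1 ↿Φ := hΦ.of_le hn'
  constructor
  · have hG : ContDiff ℝ n (fun p : H × ℝ => ∫ t in a..p.2, Φ p.1 t) := DPVE.contDiffG hn hΦ a
    have hpair : ContDiff ℝ n fun x : H => ((x, s x) : H × ℝ) := contDiff_id.prodMk hs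
    have heq : (fun x ↦ ∫ t in a..s x, Φ x t) =
        ((fun p : H × ℝ => ∫ t in a..p.2, Φ p.1 t) ∘ fun x : H => (x, s x)) := rfl
    rw [heq]
    exact hG.comp hpair
  · intro x
    have hsd : HasFDerivAt s (fderiv ℝ s x) x := ((hs.differentiable (lt_of_lt_of_le zero_lt_one hn').ne') x).hasFDerivAt
    have h2 := (DPVE.key hΦ1 a x (s x)).comp x ((hasFDerivAt_id x).prodMk hsd)
    have heq : (((∫ t in a..s x, fderiv ℝ (fun y ↦ Φ y t) x).comp
          (ContinuousLinearMap.fst ℝ H ℝ) +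
          (ContinuousLinearMap.snd ℝ H ℝ).smulRight (Φ x (s x))).comp
          ((ContinuousLinearMap.id ℝ H).prod (fderiv ℝ s x))) =
        ((∫ t in a..s x, fderiv ℝ (fun y ↦ Φ y t) x) +
          (fderiv ℝ s x).smulRight (Φ x (s x))) := by
      ext v
      simp
    have heq2 : (fun x ↦ ∫ t in a..s x, Φ x t) =
        ((fun p : H × ℝ => ∫ t in a..p.2, Φ p.1 t) ∘ fun y : H => (y, s y)) := rfl
    rw [heq2, ← heq]
    exact h2
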